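/- Let (S, ρ) be a compact metric space, Q a Borel probability on S, and Q_n the empirical measure of an i.i.d. sample X_1,…,X_n from Q. Then sup_{p∈S} |F_n(p) − F(p)| → 0 almost surely as n → ∞, where F and F_n are the Fréchet functions of Q and Q_n respectively. -/

import Mathlib

open MeasureTheory Filter Topology

/-- Deterministic lemma: pointwise convergence on a dense set plus a uniform Lipschitz
bound imply uniform convergence on a compact metric space. -/
lemma aux_unif {S : Type*} [MetricSpace S] [CompactSpace S]
    (K : ℝ) (hK : 0 ≤ K) (fn : ℕ → S → ℝ) (f : S → ℝ)
    (hfn : ∀ n p p', |fn n p - fn n p'| ≤ K * dist p p')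
    (hf : ∀ p p', |f p - f p'| ≤ K * dist p p')
    (D : Set S) (hD : Dense D)
    (hconv : ∀ p ∈ D, Tendsto (fun n => fn n p) atTop (𝓝 (f p))) :
    TendstoUniformly fn f atTop := by
  rw [Metric.tendstoUniformly_iff]
  intro ε hε
  set δ : ℝ := ε / 3 / (K + 1) with hδdef
  have hδ : 0 < δ := by positivity
  -- finite subcover by balls centered in D
  have hcover : (Set.univ : Set S) ⊆ ⋃ p ∈ D, Metric.ball p δ := by
    intro q _
    obtain ⟨p, hpD, hpq⟩ := Metric.mem_closure_iff.1 (hD q) δ hδ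
    exact Set.mem_biUnion hpD (by simpa [Metric.mem_ball, dist_comm] using hpq)
  obtain ⟨t, htD, htfin, htcover⟩ :=
    isCompact_univ.elim_finite_subcover_image (fun p _ => Metric.isOpen_ball) hcover
  have key : ∀ᶠ n in atTop, ∀ p ∈ t, |fn n p - f p| < ε / 3 := by
    rw [eventually_all_finite htfin]
    intro p hp
    have := (hconv p (htD hp)).sub_const (f p)
    have := Metric.tendsto_nhds.1 ((hconv p (htD hp)))
    filter_upwards [this (ε/3) (by positivity)] with n hn
    simpa [Real.dist_eq] using hn
  filter_upwards [key] with n hn q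
  obtain ⟨p, hp, hq⟩ := Set.mem_iUnion₂.1 (htcover (Set.mem_univ q))
  have hqp : dist q p < δ := by simpa [Metric.mem_ball] using hq
  have h1 : |fn n q - fn n p| ≤ K * dist q p := hfn n q p
  have h2 : |f p - f q| ≤ K * dist p q := hf p q
  have hKδ : K * dist q p < ε / 3 := by
    calc K * dist q p ≤ K * δ := by
          exact mul_le_mul_of_nonneg_left hqp.le hK
      _ < (K + 1) * δ := by nlinarith
      _ = ε / 3 := by rw [hδdef]; field_simp
  have hKδ' : K * dist p q < ε / 3 := by rwa [dist_comm]
  have h3 : |fn n p - f p| < ε / 3 := hn p hp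
  have : dist (f q) (fn n q) ≤ |fn n q - fn n p| + |fn n p - f p| + |f p - f q| := by
    rw [Real.dist_eq]
    have : f q - fn n q = -((fn n q - fn n p) + (fn n p - f p) + (f p - f q)) := by ring
    rw [this, abs_neg]
    exact (abs_add_le _ _).trans (by gcongr; exact abs_add_le _ _)
  linarith

lemma sq_dist_lip {S : Type*} [PseudoMetricSpace S] (C : ℝ)
    (hC : ∀ x y : S, dist x y ≤ C) (p p' q : S) :
    |dist p q ^ 2 - dist p' q ^ 2| ≤ 2 * C * dist p p' := by
  have h1 : |dist p q - dist p' q| ≤ dist p p' := abs_dist_sub_le p p' q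
  have h2 : dist p q + dist p' q ≤ 2 * C := by
    have := hC p q; have := hC p' q; linarith
  have : dist p q ^ 2 - dist p' q ^ 2 = (dist p q - dist p' q) * (dist p q + dist p' q) := by
    ring
  rw [this, abs_mul]
  have hnn : 0 ≤ dist p q + dist p' q := by positivity
  calc |dist p q - dist p' q| * |dist p q + dist p' q|
      ≤ dist p p' * (2 * C) := by
        rw [abs_of_nonneg hnn]
        exact mul_le_mul h1 h2 hnn dist_nonneg
    _ = 2 * C * dist p p' := by ring

theorem empirical_frechet_function_tendsto_uniformly
    {S : Type*} [MetricSpace S] [CompactSpace S] [MeasurableSpace S] [BorelSpace S]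
    {Ω : Type*} [MeasurableSpace Ω] (P : Measure Ω) [IsProbabilityMeasure P]
    (Q : Measure S) [IsProbabilityMeasure Q]
    (X : ℕ → Ω → S) (hmeas : ∀ n, Measurable (X n))
    (hindep : ProbabilityTheory.iIndepFun X P)
    (hid : ∀ n, Measure.map (X n) P = Q)
    (F : S → ℝ) (hF : ∀ p, F p = ∫ q, dist p q ^ 2 ∂Q)
    (Fn : ℕ → Ω → S → ℝ)
    (hFn : ∀ n ω p, Fn n ω p = (n : ℝ)⁻¹ * ∑ j ∈ Finset.range n, dist p (X j ω) ^ 2) :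
    ∀ᵐ ω ∂P, TendstoUniformly (fun n p => Fn n ω p) F atTop := by
  -- S is nonempty (it carries a probability measure)
  have hS : Nonempty S := by
    by_contra h
    rw [not_nonempty_iff] at h
    have : Q Set.univ = 1 := measure_univ
    simp [Set.univ_eq_empty_iff.2 h] at this
  -- a uniform bound on distances
  set C : ℝ := Metric.diam (Set.univ : Set S) with hCdef
  have hC : ∀ x y : S, dist x y ≤ C :=
    fun x y => Metric.dist_le_diam_of_mem isCompact_univ.isBounded trivial trivial
  have hC0 : 0 ≤ C := Metric.diam_nonneg
  -- countable dense set
  obtain ⟨D, hDc, hDd⟩ := TopologicalSpace.exists_countable_dense S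
  -- SLLN at each fixed point p
  have slln : ∀ p : S, ∀ᵐ ω ∂P,
      Tendsto (fun n => Fn n ω p) atTop (𝓝 (F p)) := by
    intro p
    set g : S → ℝ := fun q => dist p q ^ 2 with hg
    have hgm : Measurable g := ((measurable_dist.comp (measurable_const.prodMk measurable_id)).pow_const 2)
    have hgc : Continuous g := (continuous_const.dist continuous_id).pow 2
    set Y : ℕ → Ω → ℝ := fun j ω => g (X j ω) with hY
    have hYm : ∀ j, Measurable (Y j) := fun j => hgm.comp (hmeas j)
    have hident : ∀ j, ProbabilityTheory.IdentDistrib (Y j) (Y 0) P P := by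
      intro j
      have : ProbabilityTheory.IdentDistrib (X j) (X 0) P P :=
        ⟨(hmeas j).aemeasurable, (hmeas 0).aemeasurable, by rw [hid j, hid 0]⟩
      exact this.comp hgm
    have hint : Integrable (Y 0) P := by
      refine ⟨(hYm 0).aestronglyMeasurable, ?_⟩
      refine HasFiniteIntegral.of_bounded (C := C ^ 2) (Filter.Eventually.of_forall ?_)
      intro ω
      have := hC p (X 0 ω)
      have h0 : (0:ℝ) ≤ dist p (X 0 ω) := dist_nonneg
      simp only [hY, hg, Real.norm_eq_abs, abs_of_nonneg (by positivity : (0:ℝ) ≤ dist p (X 0 ω) ^ 2)]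
      nlinarith
    have hpair : Pairwise (Function.onFun (ProbabilityTheory.IndepFun · · P) Y) := by
      intro i j hij
      exact (hindep.indepFun hij).comp hgm hgm
    have := ProbabilityTheory.strong_law_ae_real Y hint hpair hident
    have hEY : (∫ ω, Y 0 ω ∂P) = F p := by
      rw [hF p, ← hid 0, integral_map (hmeas 0).aemeasurable hgm.aestronglyMeasurable]
    filter_upwards [this] with ω hω
    rw [← hEY]
    have : (fun n : ℕ => Fn n ω p) = fun n : ℕ => (∑ i ∈ Finset.range n, Y i ω) / n := by
      funext n
      rw [hFn]
      rw [div_eq_inv_mul]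
    rw [this]
    exact hω
  -- combine over the countable dense set
  have hae : ∀ᵐ ω ∂P, ∀ p ∈ D, Tendsto (fun n => Fn n ω p) atTop (𝓝 (F p)) :=
    (ae_ball_iff hDc).2 fun p _ => slln p
  filter_upwards [hae] with ω hω
  -- Lipschitz estimates
  have hFlip : ∀ p p', |F p - F p'| ≤ 2 * C * dist p p' := by
    intro p p'
    have hint : ∀ r : S, Integrable (fun q => dist r q ^ 2) Q := by
      intro r
      refine ⟨(((measurable_dist.comp (measurable_const.prodMk measurable_id)).pow_const 2)).aestronglyMeasurable, ?_⟩
      refine HasFiniteIntegral.of_bounded (C := C ^ 2) (Filter.Eventually.of_forall ?_)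
      intro q
      have := hC r q
      have h0 : (0:ℝ) ≤ dist r q := dist_nonneg
      simp only [Real.norm_eq_abs, abs_of_nonneg (by positivity : (0:ℝ) ≤ dist r q ^ 2)]
      nlinarith
    rw [hF, hF, ← integral_sub (hint p) (hint p')]
    calc |∫ q, (dist p q ^ 2 - dist p' q ^ 2) ∂Q|
        ≤ ∫ q, |dist p q ^ 2 - dist p' q ^ 2| ∂Q := by
          simpa [Real.norm_eq_abs] using
            norm_integral_le_integral_norm (fun q => dist p q ^ 2 - dist p' q ^ 2) (μ := Q)
      _ ≤ ∫ _, 2 * C * dist p p' ∂Q := by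
          refine integral_mono ((hint p).sub (hint p')).abs (integrable_const _) ?_
          intro q
          exact sq_dist_lip C hC p p' q
      _ = 2 * C * dist p p' := by simp
  have hFnlip : ∀ n p p', |Fn n ω p - Fn n ω p'| ≤ 2 * C * dist p p' := by
    intro n p p'
    rw [hFn, hFn, ← mul_sub, ← Finset.sum_sub_distrib, abs_mul]
    have h1 : |∑ j ∈ Finset.range n, (dist p (X j ω) ^ 2 - dist p' (X j ω) ^ 2)|
        ≤ ∑ j ∈ Finset.range n, (2 * C * dist p p') := by
      refine (Finset.abs_sum_le_sum_abs _ _).trans ?_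
      exact Finset.sum_le_sum fun j _ => sq_dist_lip C hC p p' (X j ω)
    rw [Finset.sum_const, Finset.card_range, nsmul_eq_mul] at h1
    have h2 : |(n : ℝ)⁻¹| = (n : ℝ)⁻¹ := abs_of_nonneg (by positivity)
    rw [h2]
    calc (n : ℝ)⁻¹ * |∑ j ∈ Finset.range n, (dist p (X j ω) ^ 2 - dist p' (X j ω) ^ 2)|
        ≤ (n : ℝ)⁻¹ * ((n : ℝ) * (2 * C * dist p p')) := by
          exact mul_le_mul_of_nonneg_left h1 (by positivity)
      _ ≤ 2 * C * dist p p' := by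
          rcases Nat.eq_zero_or_pos n with h | h
          · simp [h]; positivity
          · rw [← mul_assoc, inv_mul_cancel₀ (by positivity : (n:ℝ) ≠ 0), one_mul]
  exact aux_unif (2 * C) (by positivity) _ F hFnlip hFlip D hDd hω
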